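/- Let G = ⊎(G', P) be obtained from graph G' by attaching a path P (an ear) between two distinct vertices of G'. If X = X₀ ∪ X' with X₀ ⊆ E(P), X' ⊆ E(G'), and |X₀| is even, then X is switching-equivalent to X' in G. -/
import Mathlib


open SimpleGraph

variable {V : Type*}

/-- The edge cut `∇_G(U)`: edges of `G` with exactly one endpoint in `U`. -/
def edgeCut (G : SimpleGraph V) (U : Set V) : Set (Sym2 V) :=
  {e | e ∈ G.edgeSet ∧ ∃ x y, e = s(x, y) ∧ x ∈ U ∧ y ∉ U}

/-- Switching-equivalence of edge sets in `G`: `X = Y ⊕ ∇_G(V₀)` for some `V₀`. -/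
def SwEquiv (G : SimpleGraph V) (X Y : Set (Sym2 V)) : Prop :=
  ∃ U : Set V, X = symmDiff Y (edgeCut G U)

/-- A feasible edge set: two perfect matchings meeting `X` with different parities. -/
def Feasible (G : SimpleGraph V) (X : Set (Sym2 V)) : Prop :=
  ∃ M₁ M₂ : G.Subgraph, M₁.IsPerfectMatching ∧ M₂.IsPerfectMatching ∧
    (M₁.edgeSet ∩ X).ncard % 2 ≠ (M₂.edgeSet ∩ X).ncard % 2

/-- A matching-covered graph: connected and every edge lies in a perfect matching. -/
def MatchingCovered (G : SimpleGraph V) : Prop :=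
  G.Connected ∧ ∀ e ∈ G.edgeSet, ∃ M : G.Subgraph, M.IsPerfectMatching ∧ e ∈ M.edgeSet

/-- `G = ⊎(G', P)`: `G` is obtained from `G'` by attaching the path `p`
(a single ear) between two distinct vertices `u, v` of `G'`, the internal
vertices of `p` being disjoint from `G'`. -/
structure IsEarAttachment (G' G : SimpleGraph V) {u v : V} (p : G.Walk u v) : Prop where
  ne : u ≠ v
  isPath : p.IsPath
  uMem : u ∈ G'.support
  vMem : v ∈ G'.support
  internal : ∀ w ∈ p.support, w ≠ u → w ≠ v → w ∉ G'.support
  edgeUnion : G.edgeSet = G'.edgeSet ∪ {e | e ∈ p.edges}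
  edgeDisj : Disjoint G'.edgeSet {e | e ∈ p.edges}


open Classical in
noncomputable def mark (G : SimpleGraph V) (X : Set (Sym2 V)) :
    ∀ {u v : V}, G.Walk u v → Bool → V → Bool
  | u, _, .nil, b, w => if w = u then b else false
  | u, _, .cons (v := c) _ q, b, w =>
      if w = u then b else mark G X q (b ^^ decide (s(u, c) ∈ X)) w

open Classical in
lemma mark_start (G : SimpleGraph V) (X : Set (Sym2 V)) {u v : V} (p : G.Walk u v) (b : Bool) :
    mark G X p b u = b := by
  cases p <;> simp [mark]

open Classical in
lemma mark_notMem (G : SimpleGraph V) (X : Set (Sym2 V)) {u v : V} (p : G.Walk u v) (b : Bool)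
    {w : V} (hw : w ∉ p.support) : mark G X p b w = false := by
  induction p generalizing b with
  | nil => simp [Walk.support_nil] at hw; simp [mark, hw]
  | cons h q ih =>
    simp [Walk.support_cons] at hw
    push_neg at hw
    simp [mark, hw.1, ih _ hw.2]

open Classical in
lemma mark_end (G : SimpleGraph V) (X : Set (Sym2 V)) {u v : V} (p : G.Walk u v)
    (hp : p.support.Nodup) (b : Bool) :
    mark G X p b v = (b ^^ decide (Odd (p.edges.countP (fun e => decide (e ∈ X))))) := by
  induction p generalizing b with
  | nil => simp [mark]
  | @cons u c v h q ih =>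
    simp [Walk.support_cons] at hp
    have hvu : v ≠ u := by
      rintro rfl
      exact hp.1 (q.end_mem_support)
    rw [mark]
    simp only [if_neg hvu]
    rw [ih hp.2]
    rw [Walk.edges_cons, List.countP_cons]
    by_cases hX : s(u, c) ∈ X
    · simp [hX, Nat.odd_add_one, Bool.xor_assoc]
      cases b <;> by_cases ho : Odd (List.countP (fun e => decide (e ∈ X)) q.edges) <;>
        simp [ho, ← Nat.not_odd_iff_even]
    · simp [hX]

open Classical in
lemma mark_edge (G : SimpleGraph V) (X : Set (Sym2 V)) {u v : V} (p : G.Walk u v)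
    (hp : p.support.Nodup) (b : Bool) {x y : V} (he : s(x, y) ∈ p.edges) :
    (mark G X p b x ≠ mark G X p b y) ↔ s(x, y) ∈ X := by
  induction p generalizing b with
  | nil => simp at he
  | @cons u c v h q ih =>
    simp only [Walk.support_cons, List.nodup_cons] at hp
    rw [Walk.edges_cons, List.mem_cons] at he
    rcases he with he | he
    · rw [Sym2.eq_iff] at he
      have key : ∀ z w : V, z = u → w = c → ((mark G X (Walk.cons h q) b z ≠
          mark G X (Walk.cons h q) b w) ↔ s(u, c) ∈ X) := by
        rintro z w rfl rfl
        have h1 : mark G X (Walk.cons h q) b z = b := mark_start G X (Walk.cons h q) b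
        have h2 : mark G X (Walk.cons h q) b w = (b ^^ decide (s(z, w) ∈ X)) := by
          rw [mark, if_neg h.ne', mark_start]
        rw [h1, h2]
        by_cases hX : s(z,w) ∈ X <;> cases b <;> simp [hX]
      rcases he with ⟨rfl, rfl⟩ | ⟨rfl, rfl⟩
      · exact key x y rfl rfl
      · rw [Sym2.eq_swap]
        rw [ne_comm]
        exact key y x rfl rfl
    · have hx : x ∈ q.support := Walk.fst_mem_support_of_mem_edges q he
      have hy : y ∈ q.support := Walk.snd_mem_support_of_mem_edges q he
      have hxu : x ≠ u := fun h' => hp.1 (h' ▸ hx)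
      have hyu : y ≠ u := fun h' => hp.1 (h' ▸ hy)
      rw [mark, mark]
      simp only [if_neg hxu, if_neg hyu]
      exact ih hp.2 _ he

open Classical in
lemma countP_eq_ncard {α : Type*} {l : List α} (hl : l.Nodup) {X : Set α}
    (hX : X ⊆ {e | e ∈ l}) : l.countP (fun e => decide (e ∈ X)) = X.ncard := by
  rw [List.countP_eq_length_filter]
  have hnd : (l.filter (fun e => decide (e ∈ X))).Nodup := hl.filter _
  have hset : X = ↑(l.filter (fun e => decide (e ∈ X))).toFinset := by
    ext e
    simp only [List.coe_toFinset, Set.mem_setOf_eq, List.mem_filter, decide_eq_true_eq]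
    exact ⟨fun h => ⟨hX h, h⟩, fun h => h.2⟩
  conv_rhs => rw [hset]
  rw [Set.ncard_coe_finset, List.toFinset_card_of_nodup hnd]

/-- if `|X₀|` is even, then `X₀ ∪ X'` is switching-equivalent
to `X'` in `G = ⊎(G', P)`. -/
theorem stmt11 [Fintype V] {G' G : SimpleGraph V} {u v : V} {p : G.Walk u v}
    (hear : IsEarAttachment G' G p)
    {X₀ X' : Set (Sym2 V)} (hX₀ : X₀ ⊆ {e | e ∈ p.edges}) (hX' : X' ⊆ G'.edgeSet)
    (heven : Even X₀.ncard) :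
    SwEquiv G (X₀ ∪ X') X' := by

  classical
  have hp : p.support.Nodup := hear.isPath.support_nodup
  refine ⟨{w | mark G X₀ p false w = true}, ?_⟩
  set U : Set V := {w | mark G X₀ p false w = true} with hU
  have hmemU : ∀ w, w ∈ U ↔ mark G X₀ p false w = true := fun w => Iff.rfl
  have hcount : p.edges.countP (fun e => decide (e ∈ X₀)) = X₀.ncard :=
    countP_eq_ncard hear.isPath.edges_nodup hX₀
  have hmarkv : mark G X₀ p false v = false := by
    rw [mark_end G X₀ p hp, hcount]
    simp [Nat.not_odd_iff_even.mpr heven]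
  have hcut : edgeCut G U = X₀ := by
    ext e
    constructor
    · rintro ⟨heG, x, y, rfl, hx, hy⟩
      rw [hear.edgeUnion] at heG
      rcases heG with heG | heG
      · exfalso
        have hxs : x ∈ G'.support := ⟨y, (G'.mem_edgeSet).mp heG⟩
        have hfalse : mark G X₀ p false x = false := by
          by_cases hxp : x ∈ p.support
          · by_cases hxu : x = u
            · subst hxu; exact mark_start G X₀ p false
            · by_cases hxv : x = v
              · subst hxv; exact hmarkv
              · exact absurd hxs (hear.internal x hxp hxu hxv)
          · exact mark_notMem G X₀ p false hxp
        rw [hmemU, hfalse] at hx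
        simp at hx
      · exact (mark_edge G X₀ p hp false heG).mp (by
          rw [hmemU] at hx
          rw [hmemU] at hy
          simp only [Bool.not_eq_true] at hy
          rw [hx, hy]; simp)
    · intro he
      have hep : e ∈ p.edges := hX₀ he
      have heG : e ∈ G.edgeSet := p.edges_subset_edgeSet hep
      induction e using Sym2.ind with
      | _ a b =>
        have hne := (mark_edge G X₀ p hp false hep).mpr he
        refine ⟨heG, ?_⟩
        cases hma : mark G X₀ p false a <;> cases hmb : mark G X₀ p false b
        · rw [hma, hmb] at hne; simp at hne
        · exact ⟨b, a, Sym2.eq_swap, by rw [hmemU]; exact hmb, by rw [hmemU, hma]; simp⟩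
        · exact ⟨a, b, rfl, by rw [hmemU]; exact hma, by rw [hmemU, hmb]; simp⟩
        · rw [hma, hmb] at hne; simp at hne
  have hdisj : Disjoint X' X₀ := Set.disjoint_of_subset hX' hX₀ hear.edgeDisj
  rw [hcut, hdisj.symmDiff_eq_sup]
  exact Set.union_comm _ _
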